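/- If x̄, ȳ₁, z̄₁ are points in the hyperbolic plane ℍ² with d(x̄,ȳ₁) = d(x̄,z̄₁) = 1 and the angle at x̄ between the geodesics to ȳ₁ and z̄₁ equals π - α with α ∈ [0, π], then d(ȳ₁, z̄₁) ≤ 2 - c·α² for the constant c = (2/π²)·sinh²(1)/sinh(2). -/

import Mathlib

theorem hyperbolic_hinge_estimate (α D : ℝ) (hα0 : 0 ≤ α) (hαπ : α ≤ Real.pi)
    (hD : 0 ≤ D)
    (hlaw : Real.cosh D = Real.cosh 2 - Real.sinh 1 ^ 2 * (1 - Real.cos α)) :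
    D ≤ 2 - (2 / Real.pi ^ 2 * Real.sinh 1 ^ 2 / Real.sinh 2) * α ^ 2 := by
  set c : ℝ := 2 / Real.pi ^ 2 * Real.sinh 1 ^ 2 / Real.sinh 2 with hc
  have hπ := Real.pi_pos
  have hsinh2 : (0:ℝ) < Real.sinh 2 := Real.sinh_pos_iff.2 (by norm_num)
  have hsinh1 : (0:ℝ) < Real.sinh 1 := Real.sinh_pos_iff.2 (by norm_num)
  set s : ℝ := c * α ^ 2 with hs
  have hs0 : 0 ≤ s := by positivity
  -- s ≤ tanh 1 < 1, using 2 sinh²1 = cosh 2 - 1 and α² ≤ π²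
  have hαsq : α ^ 2 ≤ Real.pi ^ 2 := by nlinarith
  have hcosh2 : Real.cosh 2 = 2 * Real.sinh 1 ^ 2 + 1 := by
    have h2 : Real.cosh 2 = Real.cosh 1 ^ 2 + Real.sinh 1 ^ 2 := by
      rw [show (2:ℝ) = 1 + 1 by norm_num, Real.cosh_add]; ring
    have h3 := Real.cosh_sq_sub_sinh_sq 1
    nlinarith
  have hcoshsinh : Real.cosh 2 ≤ Real.sinh 2 + 1 := by
    nlinarith [Real.exp_le_one_iff.2 (by norm_num : (-2:ℝ) ≤ 0), Real.cosh_eq (2:ℝ), Real.sinh_eq (2:ℝ)]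
  have hs1 : s ≤ 1 := by
    have : s ≤ 2 / Real.pi ^ 2 * Real.sinh 1 ^ 2 / Real.sinh 2 * Real.pi ^ 2 := by
      rw [hs]
      have hc0 : 0 ≤ c := by positivity
      exact mul_le_mul_of_nonneg_left hαsq hc0
    have h2 : 2 / Real.pi ^ 2 * Real.sinh 1 ^ 2 / Real.sinh 2 * Real.pi ^ 2
        = (Real.cosh 2 - 1) / Real.sinh 2 := by
      rw [hcosh2]; field_simp; ring
    rw [h2] at this
    have : (Real.cosh 2 - 1) / Real.sinh 2 ≤ 1 := by
      rw [div_le_one hsinh2]; linarith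
    linarith [this, ‹s ≤ (Real.cosh 2 - 1) / Real.sinh 2›]
  -- Jordan: cos α ≤ 1 - 2/π² α²
  have hjordan : Real.cos α ≤ 1 - 2 / Real.pi ^ 2 * α ^ 2 :=
    Real.cos_le_one_sub_mul_cos_sq (by rw [abs_of_nonneg hα0]; exact hαπ)
  -- cosh D ≤ cosh 2 - sinh 2 * s
  have h1 : Real.cosh D ≤ Real.cosh 2 - Real.sinh 2 * s := by
    rw [hlaw, hs, hc]
    have : Real.sinh 2 * (2 / Real.pi ^ 2 * Real.sinh 1 ^ 2 / Real.sinh 2 * α ^ 2)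
        = Real.sinh 1 ^ 2 * (2 / Real.pi ^ 2 * α ^ 2) := by
      field_simp
    rw [this]
    nlinarith
  -- tangent line: cosh (2 - s) ≥ cosh 2 - sinh 2 * s
  have h2 : Real.cosh 2 - Real.sinh 2 * s ≤ Real.cosh (2 - s) := by
    rw [Real.cosh_sub]
    have he : Real.exp (-s) ≥ 1 - s := by linarith [Real.add_one_le_exp (-s)]
    have h3 : Real.sinh s - s ≤ Real.cosh s - 1 := by
      have := Real.cosh_eq s; have := Real.sinh_eq s
      nlinarith
    have h4 : Real.sinh 2 ≤ Real.cosh 2 := by nlinarith [Real.exp_pos (-2:ℝ), Real.cosh_eq (2:ℝ), Real.sinh_eq (2:ℝ)]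
    have h5 : 0 ≤ Real.cosh s - 1 := by linarith [Real.one_le_cosh s]
    have h6 : 0 ≤ Real.sinh s - s := by
      linarith [Real.self_le_sinh_iff.2 hs0]
    nlinarith
  have h7 : Real.cosh D ≤ Real.cosh (2 - s) := le_trans h1 h2
  have h8 : |D| ≤ |2 - s| := Real.cosh_le_cosh.mp h7
  rw [abs_of_nonneg hD, abs_of_nonneg (by linarith : (0:ℝ) ≤ 2 - s)] at h8
  linarith
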